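/- Let K_X and K_Y be finite sets of keys with union U, and let σ be a uniformly random linear order on U (equivalently, a uniformly random bijection from U to {1,…,|U|}). Fix n, and let L_X and L_Y be the sets of n σ-smallest elements of K_X and of K_Y respectively. Then for any two subsets T₁, T₂ ⊆ K_X ∩ K_Y with |T₁| = |T₂|, the probability that L_X ∩ L_Y = T₁ equals the probability that L_X ∩ L_Y = T₂. Consequently, conditioned on its size, the key set of the joined sketch is a uniform random subset of K_X ∩ K_Y. -/

import Mathlib

/-- `bottomN g n S` is the subset of `S` consisting of the `n` elements of `S`
with the smallest `g`-values (or all of `S` if `|S| ≤ n`): an element `x ∈ S`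
is kept iff fewer than `n` elements of `S` have strictly smaller `g`-value. -/
def bottomN {α β : Type*} [DecidableEq α] [LinearOrder β] (g : α → β) (n : ℕ)
    (S : Finset α) : Finset α :=
  S.filter (fun x => (S.filter (fun y => g y < g x)).card < n)

section aux

variable {α : Type*} [Fintype α] [DecidableEq α]

/-- A permutation moving only points of `T₁ ∪ T₂`, carrying `T₁` onto `T₂`. -/
lemma exists_perm_map (T₁ T₂ : Finset α) (hcard : T₁.card = T₂.card) :
    ∃ π : Equiv.Perm α, (∀ x, x ∈ T₁ ↔ π x ∈ T₂) ∧ (∀ x, x ∉ T₁ ∪ T₂ → π x = x) ∧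
      (∀ x, x ∈ T₁ ∪ T₂ → π x ∈ T₁ ∪ T₂) := by
  classical
  set U : Finset α := T₁ ∪ T₂ with hUdef
  set β := {x : α // x ∈ U}
  have h1 : ∀ {x : α}, x ∈ T₁ → x ∈ U := fun h => Finset.mem_union_left _ h
  have h2 : ∀ {x : α}, x ∈ T₂ → x ∈ U := fun h => Finset.mem_union_right _ h
  have c1 : Fintype.card {x : β // (x : α) ∈ T₁} = Fintype.card {x : β // (x : α) ∈ T₂} := by
    have e1 : {x : β // (x : α) ∈ T₁} ≃ {x : α // x ∈ T₁} :=
      Equiv.subtypeSubtypeEquivSubtype (fun h => h1 h)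
    have e2 : {x : β // (x : α) ∈ T₂} ≃ {x : α // x ∈ T₂} :=
      Equiv.subtypeSubtypeEquivSubtype (fun h => h2 h)
    rw [Fintype.card_congr e1, Fintype.card_congr e2, Fintype.card_coe, Fintype.card_coe, hcard]
  have c2 : Fintype.card {x : β // ¬ (x : α) ∈ T₁} = Fintype.card {x : β // ¬ (x : α) ∈ T₂} := by
    have k1 := Fintype.card_subtype_compl (fun x : β => (x : α) ∈ T₁)
    have k2 := Fintype.card_subtype_compl (fun x : β => (x : α) ∈ T₂)
    rw [k1, k2, c1]
  let e₁ : {x : β // (x : α) ∈ T₁} ≃ {x : β // (x : α) ∈ T₂} := Fintype.equivOfCardEq c1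
  let e₂ : {x : β // ¬ (x : α) ∈ T₁} ≃ {x : β // ¬ (x : α) ∈ T₂} := Fintype.equivOfCardEq c2
  let τ : Equiv.Perm β :=
    (Equiv.sumCompl (fun x : β => (x : α) ∈ T₁)).symm.trans
      ((e₁.sumCongr e₂).trans (Equiv.sumCompl (fun x : β => (x : α) ∈ T₂)))
  have hτ : ∀ x : β, (x : α) ∈ T₁ ↔ ((τ x : α) ∈ T₂) := by
    intro x
    by_cases hx : (x : α) ∈ T₁
    · have hτx : τ x = ((e₁ ⟨x, hx⟩ : β)) := by
        show (Equiv.sumCompl _) ((e₁.sumCongr e₂) ((Equiv.sumCompl _).symm x)) = _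
        rw [Equiv.sumCompl_symm_apply_of_pos (p := fun x : β => (x : α) ∈ T₁) (a := x) hx]
        rfl
      rw [hτx]
      exact iff_of_true hx (e₁ ⟨x, hx⟩).2
    · have hτx : τ x = ((e₂ ⟨x, hx⟩ : β)) := by
        show (Equiv.sumCompl _) ((e₁.sumCongr e₂) ((Equiv.sumCompl _).symm x)) = _
        rw [Equiv.sumCompl_symm_apply_of_neg (p := fun x : β => (x : α) ∈ T₁) (a := x) hx]
        rfl
      rw [hτx]
      exact iff_of_false hx (e₂ ⟨x, hx⟩).2
  let π : Equiv.Perm α := Equiv.Perm.subtypeCongr τ (Equiv.refl {x : α // ¬ x ∈ U})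
  have hπU : ∀ x (hx : x ∈ U), π x = ((τ ⟨x, hx⟩ : β) : α) := fun x hx =>
    Equiv.Perm.subtypeCongr.left_apply _ _ hx
  have hπfix : ∀ x, x ∉ U → π x = x := by
    intro x hx
    rw [Equiv.Perm.subtypeCongr.right_apply _ _ hx]
    rfl
  refine ⟨π, ?_, hπfix, ?_⟩
  · intro x
    by_cases hx : x ∈ U
    · rw [hπU x hx]; exact hτ ⟨x, hx⟩
    · rw [hπfix x hx]
      exact iff_of_false (fun h => hx (h1 h)) (fun h => hx (h2 h))
  · intro x hx
    rw [hπU x hx]; exact (τ ⟨x, hx⟩).2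

lemma bottomN_trans_mem {β : Type*} [LinearOrder β] (π : Equiv.Perm α) (S : Finset α)
    (hS : ∀ x, x ∈ S ↔ π x ∈ S) (σ : α ≃ β) (n : ℕ) (x : α) :
    x ∈ bottomN (⇑(π.symm.trans σ)) n S ↔ π.symm x ∈ bottomN (⇑σ) n S := by
  have hS' : ∀ x, x ∈ S ↔ π.symm x ∈ S := by
    intro x
    conv_lhs => rw [← π.apply_symm_apply x, ← hS]
  simp only [bottomN, Finset.mem_filter, Equiv.trans_apply]
  have hc : (S.filter (fun y => σ (π.symm y) < σ (π.symm x))).card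
      = (S.filter (fun y => σ y < σ (π.symm x))).card := by
    apply Finset.card_bij (fun y _ => π.symm y)
    · intro y hy
      simp only [Finset.mem_filter] at hy ⊢
      exact ⟨(hS' y).1 hy.1, hy.2⟩
    · intro a _ b _ h; exact π.symm.injective h
    · intro z hz
      simp only [Finset.mem_filter] at hz ⊢
      exact ⟨π z, ⟨(hS z).1 hz.1, by simpa using hz.2⟩, π.symm_apply_apply z⟩
  refine Finset.mem_filter.trans ?_
  show x ∈ S ∧ (S.filter (fun y => σ (π.symm y) < σ (π.symm x))).card < n ↔ _
  rw [hc, hS' x]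

end aux

/-- Let `K_X` and `K_Y` be finite key sets whose union `U` is the whole (finite)
ambient type, and let `σ` be a uniformly random bijection from `U` onto
`Fin |U|` (i.e., a uniformly random linear order on `U`).  Let `L_X` and `L_Y`
be the sets of the `n` σ-smallest elements of `K_X` and `K_Y`.  Then for any
two subsets `T₁, T₂ ⊆ K_X ∩ K_Y` of equal cardinality, the probability that
`L_X ∩ L_Y = T₁` equals the probability that `L_X ∩ L_Y = T₂`. -/
theorem joined_sketch_keys_uniform {α : Type*} [Fintype α] [DecidableEq α]
    (KX KY : Finset α) (hU : KX ∪ KY = Finset.univ) (n : ℕ)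
    (T₁ T₂ : Finset α) (hT₁ : T₁ ⊆ KX ∩ KY) (hT₂ : T₂ ⊆ KX ∩ KY)
    (hcard : T₁.card = T₂.card) :
    ((Finset.univ.filter
        (fun σ : α ≃ Fin (Fintype.card α) =>
          bottomN (⇑σ) n KX ∩ bottomN (⇑σ) n KY = T₁)).card : ℝ)
      / (Fintype.card (α ≃ Fin (Fintype.card α)) : ℝ)
    = ((Finset.univ.filter
        (fun σ : α ≃ Fin (Fintype.card α) =>
          bottomN (⇑σ) n KX ∩ bottomN (⇑σ) n KY = T₂)).card : ℝ)
      / (Fintype.card (α ≃ Fin (Fintype.card α)) : ℝ) := by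
  classical
  obtain ⟨π, hT, hfix, hmap⟩ := exists_perm_map T₁ T₂ hcard
  have hsub : ∀ x, x ∈ T₁ ∪ T₂ → x ∈ KX ∩ KY := by
    intro x hx
    rcases Finset.mem_union.1 hx with h | h
    exacts [hT₁ h, hT₂ h]
  have hKX : ∀ x, x ∈ KX ↔ π x ∈ KX := by
    intro x
    by_cases hx : x ∈ T₁ ∪ T₂
    · exact iff_of_true (Finset.mem_of_mem_inter_left (hsub x hx))
        (Finset.mem_of_mem_inter_left (hsub _ (hmap x hx)))
    · rw [hfix x hx]
  have hKY : ∀ x, x ∈ KY ↔ π x ∈ KY := by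
    intro x
    by_cases hx : x ∈ T₁ ∪ T₂
    · exact iff_of_true (Finset.mem_of_mem_inter_right (hsub x hx))
        (Finset.mem_of_mem_inter_right (hsub _ (hmap x hx)))
    · rw [hfix x hx]
  have hKX' : ∀ x, x ∈ KX ↔ π.symm x ∈ KX := fun x => by
    conv_lhs => rw [← π.apply_symm_apply x, ← hKX]
  have hKY' : ∀ x, x ∈ KY ↔ π.symm x ∈ KY := fun x => by
    conv_lhs => rw [← π.apply_symm_apply x, ← hKY]
  have hT' : ∀ x, x ∈ T₂ ↔ π.symm x ∈ T₁ := fun x => by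
    conv_lhs => rw [← π.apply_symm_apply x, ← hT]
  have key : (Finset.univ.filter
        (fun σ : α ≃ Fin (Fintype.card α) =>
          bottomN (⇑σ) n KX ∩ bottomN (⇑σ) n KY = T₁)).card
      = (Finset.univ.filter
        (fun σ : α ≃ Fin (Fintype.card α) =>
          bottomN (⇑σ) n KX ∩ bottomN (⇑σ) n KY = T₂)).card := by
    apply Finset.card_nbij' (fun σ => π.symm.trans σ) (fun σ => π.symm.symm.trans σ)
    · intro σ hσ
      simp only [Finset.coe_filter, Finset.mem_filter, Finset.mem_univ, true_and, Set.mem_setOf_eq] at hσ ⊢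
      ext x
      rw [Finset.mem_inter, bottomN_trans_mem π KX hKX σ n x,
        bottomN_trans_mem π KY hKY σ n x, ← Finset.mem_inter, hσ]
      exact (hT' x).symm
    · intro σ hσ
      simp only [Finset.coe_filter, Finset.mem_filter, Finset.mem_univ, true_and, Set.mem_setOf_eq] at hσ ⊢
      ext x
      rw [Finset.mem_inter, bottomN_trans_mem π.symm KX hKX' σ n x,
        bottomN_trans_mem π.symm KY hKY' σ n x, ← Finset.mem_inter, hσ]
      rw [Equiv.symm_symm]
      exact (hT x).symm
    · intro σ _
      ext x
      simp
    · intro σ _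
      ext x
      simp
  rw [key]
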